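/- The negativity of a pure state in Schmidt form is N(|ψ⟩⟨ψ|) = ∑_{i<j} λ_iλ_j = ((∑_j λ_j)² − 1)/2, where |ψ⟩ = ∑_j λ_j |j⟩⊗|j⟩ with λ_j ≥ 0 and ∑_j λ_j² = 1. -/

import Mathlib

open Matrix Kronecker ComplexOrder BigOperators Finset

noncomputable section

def ptranspose {m n : Type*} (X : Matrix (m × n) (m × n) ℂ) : Matrix (m × n) (m × n) ℂ :=
  Matrix.of fun p q => X (q.1, p.2) (p.1, q.2)

def traceNorm {d : Type*} [Fintype d] [DecidableEq d] (A : Matrix d d ℂ) : ℝ :=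
  (((Matrix.posSemidef_conjTranspose_mul_self A).1.eigenvectorUnitary : Matrix d d ℂ) *
    diagonal (((↑) : ℝ → ℂ) ∘ (√·) ∘ (Matrix.posSemidef_conjTranspose_mul_self A).1.eigenvalues) *
    (star (Matrix.posSemidef_conjTranspose_mul_self A).1.eigenvectorUnitary : Matrix d d ℂ)).trace.re

def proj {ι : Type*} (v : ι → ℂ) : Matrix ι ι ℂ := Matrix.vecMulVec v (star v)

def schmidtVec {d : ℕ} (l : Fin d → ℝ) : Fin d × Fin d → ℂ :=
  fun p => if p.1 = p.2 then (l p.1 : ℂ) else 0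

lemma key {d : ℕ} (l : Fin d → ℝ) :
    (ptranspose (proj (schmidtVec l)))ᴴ * (ptranspose (proj (schmidtVec l)))
      = (diagonal fun p : Fin d × Fin d => ((l p.1 * l p.2 : ℝ) : ℂ)) ^ 2 := by
  rw [sq]
  ext p q
  simp only [mul_apply, ptranspose, proj, schmidtVec, vecMulVec, conjTranspose_apply,
    of_apply, diagonal_apply, Pi.star_apply, Fintype.sum_prod_type]
  simp only [apply_ite (star · ), star_zero, ite_mul, zero_mul, mul_ite, mul_zero, star_mul']
  simp [Finset.sum_ite_eq, Finset.sum_ite_eq', Prod.ext_iff]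
  simp [ite_and]
  split_ifs <;> simp_all

open scoped MatrixOrder in
lemma traceNorm_eq {d : ℕ} (l : Fin d → ℝ) (hl : ∀ j, 0 ≤ l j) :
    traceNorm (ptranspose (proj (schmidtVec l))) = (∑ j, l j) ^ 2 := by
  have hD : PosSemidef (diagonal fun p : Fin d × Fin d => ((l p.1 * l p.2 : ℝ) : ℂ)) := by
    refine posSemidef_diagonal_iff.mpr fun p => ?_
    rw [Complex.zero_le_real]
    exact mul_nonneg (hl _) (hl _)
  have hs : ((Matrix.posSemidef_conjTranspose_mul_self (ptranspose (proj (schmidtVec l)))).1.eigenvectorUnitary : Matrix _ _ ℂ) *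
      diagonal (((↑) : ℝ → ℂ) ∘ (√·) ∘ (Matrix.posSemidef_conjTranspose_mul_self (ptranspose (proj (schmidtVec l)))).1.eigenvalues) *
      (star (Matrix.posSemidef_conjTranspose_mul_self (ptranspose (proj (schmidtVec l)))).1.eigenvectorUnitary : Matrix _ _ ℂ)
      = diagonal fun p : Fin d × Fin d => ((l p.1 * l p.2 : ℝ) : ℂ) := by
    have h1 := CFC.sqrt_sq (diagonal fun p : Fin d × Fin d => ((l p.1 * l p.2 : ℝ) : ℂ))
      (nonneg_iff_posSemidef.mpr hD)
    rw [← key l, CFC.sqrt_eq_cfc, cfc_nnreal_eq_real _ _ (nonneg_iff_posSemidef.mpr (posSemidef_conjTranspose_mul_self _)),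
      (Matrix.posSemidef_conjTranspose_mul_self _).1.cfc_eq, IsHermitian.cfc,
      Unitary.conjStarAlgAut_apply] at h1
    rw [← h1]
    congr 3
    funext x
    simp only [Function.comp_apply]
    rw [Real.sqrt]
    rfl
  rw [traceNorm, hs, trace_diagonal]
  rw [Complex.re_sum]
  simp [Fintype.sum_prod_type, sq, Finset.sum_mul_sum]

lemma sq_sum_eq {d : ℕ} (l : Fin d → ℝ) :
    (∑ j, l j) ^ 2 = ∑ j, l j ^ 2
      + 2 * ∑ q ∈ Finset.univ.filter (fun q : Fin d × Fin d => q.1 < q.2), l q.1 * l q.2 := by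
  have h0 : (∑ j, l j) ^ 2 = ∑ p : Fin d × Fin d, l p.1 * l p.2 := by
    simp [sq, Fintype.sum_prod_type, Finset.sum_mul_sum]
  rw [h0, ← Finset.sum_filter_add_sum_filter_not Finset.univ (fun p : Fin d × Fin d => p.1 < p.2)]
  rw [← Finset.sum_filter_add_sum_filter_not (Finset.univ.filter (fun p : Fin d × Fin d => ¬ p.1 < p.2))
    (fun p : Fin d × Fin d => p.1 = p.2)]
  have hA : (Finset.univ.filter (fun p : Fin d × Fin d => ¬ p.1 < p.2)).filter
      (fun p => p.1 = p.2) = Finset.univ.filter (fun p : Fin d × Fin d => p.1 = p.2) := by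
    rw [Finset.filter_filter]
    apply Finset.filter_congr
    intro p _
    constructor
    · exact fun h => h.2
    · exact fun h => ⟨by omega, h⟩
  have hB : (Finset.univ.filter (fun p : Fin d × Fin d => ¬ p.1 < p.2)).filter
      (fun p => ¬ p.1 = p.2) = Finset.univ.filter (fun p : Fin d × Fin d => p.2 < p.1) := by
    rw [Finset.filter_filter]
    apply Finset.filter_congr
    intro p _
    omega
  rw [hA, hB]
  have hdiag : ∑ p ∈ Finset.univ.filter (fun p : Fin d × Fin d => p.1 = p.2), l p.1 * l p.2
      = ∑ j, l j ^ 2 := by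
    refine Finset.sum_nbij' (fun p => p.1) (fun j => (j, j)) ?_ ?_ ?_ ?_ ?_
    · intro a _; exact Finset.mem_univ _
    · intro a _; simp
    · intro a ha
      simp only [Finset.mem_filter] at ha
      exact Prod.ext rfl ha.2
    · intro a _; rfl
    · intro a ha
      simp only [Finset.mem_filter] at ha
      simp [sq, ha.2]
  have hswap : ∑ p ∈ Finset.univ.filter (fun p : Fin d × Fin d => p.2 < p.1), l p.1 * l p.2
      = ∑ p ∈ Finset.univ.filter (fun p : Fin d × Fin d => p.1 < p.2), l p.1 * l p.2 := by
    refine Finset.sum_nbij' Prod.swap Prod.swap ?_ ?_ ?_ ?_ ?_ <;>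
      simp [Finset.mem_filter, mul_comm]
  rw [hdiag, hswap]
  ring

/-- The negativity of a pure state in Schmidt form:
`N(|ψ⟩⟨ψ|) = ∑_{i<j} λ_iλ_j = ((∑_j λ_j)² − 1)/2`. -/
theorem negativity_pure_schmidt {d : ℕ} (l : Fin d → ℝ)
    (hl : ∀ j, 0 ≤ l j) (hnorm : ∑ j, (l j) ^ 2 = 1) :
    (traceNorm (ptranspose (proj (schmidtVec l))) - 1) / 2
        = ∑ q ∈ Finset.univ.filter (fun q : Fin d × Fin d => q.1 < q.2), l q.1 * l q.2 ∧
    (traceNorm (ptranspose (proj (schmidtVec l))) - 1) / 2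
        = ((∑ j, l j) ^ 2 - 1) / 2 := by
  have h1 := traceNorm_eq l hl
  have h2 := sq_sum_eq l
  rw [hnorm] at h2
  constructor
  · rw [h1, h2]; ring
  · rw [h1]
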